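/- Let q be a prime power, m ≥ n, and let γ_1,…,γ_n ∈ F_{q^m} be linearly independent over F_q. Let 0 ≤ i_1 < i_2 < … < i_k ≤ n−1 be integers with k ≤ n. For m = (m_1,…,m_k) ∈ (F_{q^m})^k define the linearized polynomial L_m(x) = Σ_{j=1}^{k} m_j x^{q^{i_j}} and the code C = {(L_m(γ_1),…,L_m(γ_n)) : m ∈ (F_{q^m})^k} ⊆ (F_{q^m})^n. Then the map m ↦ (L_m(γ_1),…,L_m(γ_n)) is injective, and every nonzero codeword c ∈ C satisfies rk(c) ≥ n − i_k; consequently C is an F_{q^m}-linear code of dimension k over F_{q^m} with minimum rank distance at least n − i_k. -/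

import Mathlib

open Polynomial Module


/-- The rank over `Fq` of a vector with entries in `Km`. -/
noncomputable def rankVec (Fq : Type*) [Field Fq] {Km : Type*} [Field Km] [Algebra Fq Km]
    {ι : Type*} (c : ι → Km) : ℕ :=
  Module.finrank Fq (Submodule.span Fq (Set.range c))

/-- **Rank distance of codes obtained by evaluating linearized polynomials.**
Let `q` be a prime power, `m ≥ n`, and `γ_1,…,γ_n ∈ F_{q^m}` linearly independent over
`F_q`.  Let `0 ≤ i_1 < … < i_k ≤ n-1` with `k ≤ n`, and for a message `M ∈ (F_{q^m})^k` let
`L_M(x) = Σ_j M_j x^{q^{i_j}}`.  Then the evaluation map `M ↦ (L_M(γ_1),…,L_M(γ_n))` is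
injective, every nonzero codeword has rank at least `n - i_k`, and the resulting code is an
`F_{q^m}`-linear code of dimension `k` over `F_{q^m}` with minimum rank distance at least
`n - i_k`. -/
theorem linearized_evaluation_code_rank_distance
    (q m n k : ℕ) (hq : IsPrimePow q) (hmn : n ≤ m) (hkn : k ≤ n) (hk : 0 < k)
    (Fq Km : Type*) [Field Fq] [Fintype Fq] [Field Km] [Fintype Km] [Algebra Fq Km]
    (hcFq : Fintype.card Fq = q) (hcKm : Fintype.card Km = q ^ m)
    (γ : Fin n → Km) (hγ : LinearIndependent Fq γ)
    (e : Fin k → ℕ) (he : StrictMono e) (hemax : ∀ j, e j ≤ n - 1) :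
    -- injectivity of the evaluation map
    Function.Injective (fun M : Fin k → Km =>
      fun a : Fin n => ∑ j : Fin k, M j * (γ a) ^ (q ^ (e j))) ∧
    -- every nonzero codeword has rank at least `n - i_k`
    (∀ M : Fin k → Km, M ≠ 0 →
      n - e ⟨k - 1, by omega⟩ ≤
        rankVec Fq (fun a : Fin n => ∑ j : Fin k, M j * (γ a) ^ (q ^ (e j)))) ∧
    -- the code is `F_{q^m}`-linear of dimension `k` over `F_{q^m}` …
    (∃ W : Submodule Km (Fin n → Km),
        (W : Set (Fin n → Km)) =
          {c | ∃ M : Fin k → Km, c = fun a => ∑ j : Fin k, M j * (γ a) ^ (q ^ (e j))} ∧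
        Module.finrank Km W = k) ∧
    -- … with minimum rank distance at least `n - i_k`
    (∀ M M' : Fin k → Km,
      (fun a : Fin n => ∑ j : Fin k, M j * (γ a) ^ (q ^ (e j))) ≠
        (fun a : Fin n => ∑ j : Fin k, M' j * (γ a) ^ (q ^ (e j))) →
      n - e ⟨k - 1, by omega⟩ ≤
        rankVec Fq (fun a : Fin n =>
          (∑ j : Fin k, M j * (γ a) ^ (q ^ (e j))) -
            ∑ j : Fin k, M' j * (γ a) ^ (q ^ (e j)))) := by
  classical
  have hq2 : 2 ≤ q := hq.two_le
  have hq1 : 1 < q := hq2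
  set E : ℕ := e ⟨k - 1, by omega⟩ with hE
  have hEmax : E ≤ n - 1 := hemax _
  have hjE : ∀ j : Fin k, e j ≤ E := by
    intro j
    exact he.monotone (by simp [Fin.le_def]; omega)
  -- characteristic
  obtain ⟨p, s, hpp, hs, hqs⟩ := hq
  have hpp' : Nat.Prime p := hpp.nat_prime
  haveI : Fact (Nat.Prime p) := ⟨hpp'⟩
  have hcharKm : CharP Km p := by
    haveI := ringChar.charP Km
    obtain ⟨t, hrp, hcard⟩ := FiniteField.card Km (ringChar Km)
    have hdvd : p ∣ (ringChar Km) ^ (t : ℕ) := by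
      rw [← hcard, hcKm, ← hqs, ← pow_mul]
      exact dvd_pow_self p (Nat.mul_ne_zero (by omega) (by omega))
    have := (Nat.Prime.dvd_of_dvd_pow hpp' hdvd)
    have hpr : p = ringChar Km := ((Nat.prime_dvd_prime_iff_eq hpp' hrp).mp this)
    rw [hpr]; exact ringChar.charP Km
  haveI := hcharKm
  -- Frobenius-type facts
  have hadd : ∀ (t : ℕ) (x y : Km), (x + y) ^ q ^ t = x ^ q ^ t + y ^ q ^ t := by
    intro t x y
    rw [← hqs, ← pow_mul, add_pow_char_pow, pow_mul]
  have hsc : ∀ (t : ℕ) (a : Fq), (algebraMap Fq Km a) ^ q ^ t = algebraMap Fq Km a := by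
    intro t a
    rw [← map_pow, ← hcFq, FiniteField.pow_card_pow]
  -- the linearized polynomial as an Fq-linear map
  have hLex : ∀ M : Fin k → Km, ∃ L : Km →ₗ[Fq] Km,
      ∀ x : Km, L x = ∑ j : Fin k, M j * x ^ q ^ e j := by
    intro M
    refine ⟨{ toFun := fun x => ∑ j : Fin k, M j * x ^ q ^ e j,
              map_add' := ?_, map_smul' := ?_ }, fun _ => rfl⟩
    · intro x y
      simp only [hadd, mul_add, Finset.sum_add_distrib]
    · intro a x
      simp only [Algebra.smul_def, RingHom.id_apply, Finset.mul_sum, mul_pow, hsc]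
      refine Finset.sum_congr rfl fun j _ => by ring
  choose L hL using hLex
  -- kernel bound
  have hkerL : ∀ M : Fin k → Km, M ≠ 0 →
      Module.finrank Fq (LinearMap.ker (L M)) ≤ E := by
    intro M hM
    set P : Km[X] := ∑ j : Fin k, C (M j) * X ^ (q ^ e j) with hP
    have hmono : StrictMono fun j : Fin k => q ^ e j :=
      fun i j hij => Nat.pow_lt_pow_right hq1 (he hij)
    obtain ⟨j0, hj0⟩ : ∃ j, M j ≠ 0 := Function.ne_iff.mp hM
    have hPne : P ≠ 0 := by
      intro h0
      apply hj0
      have : P.coeff (q ^ e j0) = M j0 := by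
        rw [hP, finset_sum_coeff]
        rw [Finset.sum_eq_single j0]
        · simp
        · intro b _ hb
          simp only [coeff_C_mul, coeff_X_pow]
          rw [if_neg (fun h => hb (hmono.injective h.symm))]
          simp
        · simp
      rw [← this, h0, coeff_zero]
    have hdeg : P.natDegree ≤ q ^ E := by
      refine (natDegree_sum_le _ _).trans ?_
      rw [Finset.fold_max_le]
      refine ⟨Nat.zero_le _, fun j _ => ?_⟩
      refine (natDegree_C_mul_le _ _).trans ?_
      simp only [natDegree_X_pow]
      exact Nat.pow_le_pow_right (by omega) (hjE j)
    have heval : ∀ x : Km, P.eval x = L M x := by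
      intro x
      rw [hL, hP, eval_finset_sum]
      simp
    -- injection from the kernel into the roots of P
    have hcard : Fintype.card (LinearMap.ker (L M)) ≤ q ^ E := by
      have hinj : Function.Injective
          (fun x : LinearMap.ker (L M) => (⟨x.1, by
            rw [Multiset.mem_toFinset, mem_roots hPne, IsRoot.def, heval]
            exact x.2⟩ : {y // y ∈ P.roots.toFinset})) := by
        intro a b hab
        simp only [Subtype.mk.injEq] at hab
        exact Subtype.ext hab
      calc Fintype.card (LinearMap.ker (L M)) ≤ Fintype.card {y // y ∈ P.roots.toFinset} :=
            Fintype.card_le_of_injective _ hinj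
        _ = P.roots.toFinset.card := Fintype.card_coe _
        _ ≤ Multiset.card P.roots := P.roots.toFinset_card_le
        _ ≤ P.natDegree := P.card_roots'
        _ ≤ q ^ E := hdeg
    have hc2 : Fintype.card (LinearMap.ker (L M)) =
        q ^ Module.finrank Fq (LinearMap.ker (L M)) := by
      rw [← hcFq]; exact card_eq_pow_finrank
    rw [hc2] at hcard
    exact (Nat.pow_le_pow_iff_right hq1).mp hcard
  -- span of γ
  set V : Submodule Fq Km := Submodule.span Fq (Set.range γ) with hV
  have hVrank : Module.finrank Fq V = n := by
    rw [hV, finrank_span_eq_card hγ, Fintype.card_fin]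
  -- zero codeword implies zero message
  have hzero : ∀ M : Fin k → Km,
      (fun a : Fin n => ∑ j : Fin k, M j * (γ a) ^ (q ^ (e j))) = 0 → M = 0 := by
    intro M h0
    by_contra hM
    have hle : V ≤ LinearMap.ker (L M) := by
      rw [hV, Submodule.span_le]
      rintro x ⟨a, rfl⟩
      rw [SetLike.mem_coe, LinearMap.mem_ker, hL]
      exact congrFun h0 a
    have h1 : n ≤ Module.finrank Fq (LinearMap.ker (L M)) := by
      rw [← hVrank]; exact Submodule.finrank_mono hle
    have h2 := hkerL M hM
    omega
  -- the evaluation map is Km-linear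
  obtain ⟨Φ, hΦ⟩ : ∃ Φ : (Fin k → Km) →ₗ[Km] (Fin n → Km),
      ∀ (M : Fin k → Km) (a : Fin n), Φ M a = ∑ j : Fin k, M j * (γ a) ^ (q ^ (e j)) := by
    refine ⟨{ toFun := fun M => fun a => ∑ j : Fin k, M j * (γ a) ^ (q ^ (e j)),
              map_add' := ?_, map_smul' := ?_ }, fun _ _ => rfl⟩
    · intro M M'
      funext a
      simp [add_mul, Finset.sum_add_distrib]
    · intro c M
      funext a
      simp [Finset.mul_sum, mul_assoc]
  have hΦfun : ∀ M : Fin k → Km,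
      Φ M = fun a : Fin n => ∑ j : Fin k, M j * (γ a) ^ (q ^ (e j)) := by
    intro M; funext a; exact hΦ M a
  -- injectivity
  have hinj : Function.Injective (fun M : Fin k → Km =>
      fun a : Fin n => ∑ j : Fin k, M j * (γ a) ^ (q ^ (e j))) := by
    intro M M' hMM'
    have hMM2 : (fun a : Fin n => ∑ j : Fin k, M j * (γ a) ^ (q ^ (e j))) =
        fun a : Fin n => ∑ j : Fin k, M' j * (γ a) ^ (q ^ (e j)) := hMM'
    have : Φ (M - M') = 0 := by
      rw [map_sub, hΦfun, hΦfun, hMM2, sub_self]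
    rw [hΦfun] at this
    have := hzero _ this
    have hMM : M - M' = 0 := by
      funext j
      have := congrFun this j
      simpa [sub_eq_zero] using this
    funext j
    have := congrFun hMM j
    simpa [sub_eq_zero] using this
  -- rank bound
  have hrank : ∀ M : Fin k → Km, M ≠ 0 →
      n - E ≤ rankVec Fq (fun a : Fin n => ∑ j : Fin k, M j * (γ a) ^ (q ^ (e j))) := by
    intro M hM
    have hspan : Submodule.span Fq
        (Set.range fun a : Fin n => ∑ j : Fin k, M j * (γ a) ^ (q ^ (e j))) =
        V.map (L M) := by
      have hc : (fun a : Fin n => ∑ j : Fin k, M j * (γ a) ^ (q ^ (e j))) = ⇑(L M) ∘ γ := by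
        funext a
        simp [Function.comp, hL]
      rw [hV, Submodule.map_span, ← Set.range_comp, ← hc]
    have hrn := LinearMap.finrank_range_add_finrank_ker ((L M).domRestrict V)
    rw [LinearMap.range_domRestrict, hVrank] at hrn
    have hker2 : Module.finrank Fq (LinearMap.ker ((L M).domRestrict V)) ≤ E := by
      refine le_trans ?_ (hkerL M hM)
      have hinj2 : Function.Injective (fun x : LinearMap.ker ((L M).domRestrict V) =>
          (⟨x.1.1, by
            have := x.2
            rw [LinearMap.mem_ker, LinearMap.domRestrict_apply] at this
            exact LinearMap.mem_ker.mpr this⟩ : LinearMap.ker (L M))) := by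
        intro a b hab
        simp only [Subtype.mk.injEq] at hab
        exact Subtype.ext (Subtype.ext hab)
      have hc1 : Fintype.card (LinearMap.ker ((L M).domRestrict V)) ≤
          Fintype.card (LinearMap.ker (L M)) := Fintype.card_le_of_injective _ hinj2
      have e1 : Fintype.card (LinearMap.ker ((L M).domRestrict V)) =
          q ^ Module.finrank Fq (LinearMap.ker ((L M).domRestrict V)) := by
        rw [← hcFq]; exact Module.card_eq_pow_finrank (K := Fq) (V := LinearMap.ker ((L M).domRestrict V))
      have e2 : Fintype.card (LinearMap.ker (L M)) =
          q ^ Module.finrank Fq (LinearMap.ker (L M)) := by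
        rw [← hcFq]; exact card_eq_pow_finrank
      rw [e1, e2] at hc1
      exact (Nat.pow_le_pow_iff_right hq1).mp hc1
    rw [rankVec, hspan]
    omega
  refine ⟨hinj, hrank, ?_, ?_⟩
  · -- the code as a submodule
    refine ⟨LinearMap.range Φ, ?_, ?_⟩
    · ext c
      simp only [SetLike.mem_coe, LinearMap.mem_range, Set.mem_setOf_eq]
      constructor
      · rintro ⟨M, rfl⟩; exact ⟨M, hΦfun M⟩
      · rintro ⟨M, rfl⟩; exact ⟨M, hΦfun M⟩
    · have hΦinj : Function.Injective Φ := by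
        intro M M' h
        have h2 : (fun a : Fin n => ∑ j : Fin k, M j * (γ a) ^ (q ^ (e j))) =
            fun a : Fin n => ∑ j : Fin k, M' j * (γ a) ^ (q ^ (e j)) := by
          rw [← hΦfun M, ← hΦfun M', h]
        exact hinj h2
      rw [LinearMap.finrank_range_of_inj hΦinj, Module.finrank_pi, Fintype.card_fin]
  · -- minimum distance
    intro M M' hne
    have hsub : (fun a : Fin n =>
        (∑ j : Fin k, M j * (γ a) ^ (q ^ (e j))) - ∑ j : Fin k, M' j * (γ a) ^ (q ^ (e j))) =
        fun a : Fin n => ∑ j : Fin k, (M - M') j * (γ a) ^ (q ^ (e j)) := by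
      funext a
      rw [← Finset.sum_sub_distrib]
      refine Finset.sum_congr rfl fun j _ => by simp [sub_mul]
    rw [hsub]
    refine hrank (M - M') ?_
    intro h
    apply hne
    have : M = M' := by
      funext j
      have := congrFun h j
      simpa [sub_eq_zero] using this
    rw [this]
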